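/- arXiv:1509.07374 — 3 statements merged into one kernel-verified Lean document; each statement's English description precedes it below -/
import Mathlib

section
/- Let π ∈ S_L with ‖π‖ = k, and let t₁t₂⋯t_k be a product of transpositions equal to π. Then for every j ∈ {1,...,k}, the two elements swapped by t_j lie in two different cycles of the partial product t₁⋯t_{j−1}, and lie in the same cycle of π. -/
/-- The transposition norm of a permutation: the minimal number of transpositions
whose product equals `σ`. -/
noncomputable def permNorm {α : Type*} [DecidableEq α] (σ : Equiv.Perm α) : ℕ :=
  sInf {k : ℕ | ∃ l : List (Equiv.Perm α),
    l.length = k ∧ (∀ t ∈ l, t.IsSwap) ∧ l.prod = σ}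
set_option linter.unusedSectionVars false
set_option linter.unusedVariables false

open Equiv Equiv.Perm

namespace SwapFactors

variable {α : Type*} [Fintype α] [DecidableEq α]

lemma mul_swap_apply_of_ne (σ : Perm α) {x y z : α} (hzx : z ≠ x) (hzy : z ≠ y) :
    (σ * Equiv.swap x y) z = σ z := by
  simp [Equiv.Perm.mul_apply, Equiv.swap_apply_of_ne_of_ne hzx hzy]

lemma mul_swap_apply_left (σ : Perm α) (x y : α) : (σ * Equiv.swap x y) x = σ y := by
  simp [Equiv.Perm.mul_apply]

lemma mul_swap_apply_right (σ : Perm α) (x y : α) : (σ * Equiv.swap x y) y = σ x := by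
  simp [Equiv.Perm.mul_apply]

/-- K2: merging -/
lemma sameCycle_mul_swap_of_not (σ : Perm α) {x y : α} (hxy : x ≠ y)
    (hn : ¬ σ.SameCycle x y) : (σ * Equiv.swap x y).SameCycle x y := by
  set τ := σ * Equiv.swap x y with hτ
  have hex : ∃ d, 0 < d ∧ (σ ^ d) y = y :=
    ⟨orderOf σ, orderOf_pos σ, by rw [pow_orderOf_eq_one]; rfl⟩
  set d := Nat.find hex with hd
  obtain ⟨hd0, hdy⟩ := Nat.find_spec hex
  have hmin : ∀ j, 0 < j → j < d → (σ ^ j) y ≠ y := by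
    intro j hj0 hjd hy
    exact Nat.find_min hex hjd ⟨hj0, hy⟩
  have claim : ∀ j, 0 < j → j ≤ d → (τ ^ j) x = (σ ^ j) y := by
    intro j
    induction j with
    | zero => intro h; omega
    | succ i ih =>
      intro _ hle
      rcases Nat.eq_zero_or_pos i with hi | hi
      · subst hi
        simp [pow_succ', mul_swap_apply_left, hτ]
      · have hid : i < d := by omega
        have h1 : (σ ^ i) y ≠ y := hmin i hi hid
        have h2 : (σ ^ i) y ≠ x := by
          intro h
          exact hn ⟨-(i : ℤ), by rw [← h]; simp [← zpow_natCast]⟩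
        rw [pow_succ', Equiv.Perm.mul_apply, ih hi (le_of_lt hid), hτ,
          mul_swap_apply_of_ne _ h2 h1, ← Equiv.Perm.mul_apply, ← pow_succ']
  exact ⟨(d : ℤ), by rw [zpow_natCast, claim d hd0 le_rfl, hdy]⟩

/-- K5: flip -/
lemma not_sameCycle_mul_swap_of (σ : Perm α) {x y : α} (hxy : x ≠ y)
    (hs : σ.SameCycle x y) : ¬ (σ * Equiv.swap x y).SameCycle x y := by
  set τ := σ * Equiv.swap x y with hτ
  have hex : ∃ d, 0 < d ∧ (σ ^ d) y = x := by
    obtain ⟨i, hi0, _, hix⟩ := (hs.symm).exists_pow_eq''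
    exact ⟨i, hi0, hix⟩
  set d := Nat.find hex with hd
  obtain ⟨hd0, hdy⟩ := Nat.find_spec hex
  have hmin : ∀ j, 0 < j → j < d → (σ ^ j) y ≠ x := by
    intro j hj0 hjd hy
    exact Nat.find_min hex hjd ⟨hj0, hy⟩
  have hny : ∀ j, 0 < j → j ≤ d → (σ ^ j) y ≠ y := by
    intro j hj0 hjd he
    have hjd' : j < d := by
      rcases lt_or_eq_of_le hjd with h | h
      · exact h
      · exfalso; rw [h, hdy] at he; exact hxy he
    have : (σ ^ (d - j)) y = x := by
      have : (σ ^ (d - j)) ((σ ^ j) y) = x := by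
        rw [← Equiv.Perm.mul_apply, ← pow_add, Nat.sub_add_cancel (le_of_lt hjd')]
        exact hdy
      rwa [he] at this
    exact hmin (d - j) (by omega) (by omega) this
  have claim : ∀ i : ℕ, ∃ j, 0 < j ∧ j ≤ d ∧ (τ ^ i) x = (σ ^ j) y := by
    intro i
    induction i with
    | zero => exact ⟨d, hd0, le_rfl, by simp [hdy]; exact hdy.symm⟩
    | succ i ih =>
      obtain ⟨j, hj0, hjd, hij⟩ := ih
      rcases lt_or_eq_of_le hjd with hjlt | hjeq
      · refine ⟨j + 1, by omega, by omega, ?_⟩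
        rw [pow_succ', Equiv.Perm.mul_apply, hij, hτ,
          mul_swap_apply_of_ne _ (hmin j hj0 hjlt) (hny j hj0 hjd),
          ← Equiv.Perm.mul_apply, ← pow_succ']
      · refine ⟨1, one_pos, hd0, ?_⟩
        rw [pow_succ', Equiv.Perm.mul_apply, hij, hjeq, hdy, hτ,
          mul_swap_apply_left, pow_one]
  intro h
  obtain ⟨i, _, hiy⟩ := h.exists_pow_eq'
  obtain ⟨j, hj0, hjd, hij⟩ := claim i
  rw [hiy] at hij
  exact hny j hj0 hjd hij.symm


/-- step: every point is `τ`-same-cycle with its `σ`-image, in the merge case. -/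
lemma sameCycle_mul_swap_apply (σ : Perm α) {x y : α} (hxy : x ≠ y)
    (hn : ¬ σ.SameCycle x y) (u : α) : (σ * Equiv.swap x y).SameCycle u (σ u) := by
  set τ := σ * Equiv.swap x y with hτ
  by_cases hux : u = x
  · subst hux
    have h1 : τ.SameCycle y (σ u) := ⟨1, by simp [hτ, mul_swap_apply_right]⟩
    exact (sameCycle_mul_swap_of_not σ hxy hn).trans h1
  · by_cases huy : u = y
    · subst huy
      have h1 : τ.SameCycle x (σ u) := ⟨1, by simp [hτ, mul_swap_apply_left]⟩
      exact ((sameCycle_mul_swap_of_not σ hxy hn).symm).trans h1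
    · exact ⟨1, by simp [hτ, mul_swap_apply_of_ne σ hux huy]⟩

/-- K3: monotonicity in the merge case. -/
lemma sameCycle_mul_swap_mono (σ : Perm α) {x y : α} (hxy : x ≠ y)
    (hn : ¬ σ.SameCycle x y) {u v : α} (h : σ.SameCycle u v) :
    (σ * Equiv.swap x y).SameCycle u v := by
  obtain ⟨i, hi, rfl⟩ := h.exists_pow_eq'
  clear hi h
  induction i with
  | zero => exact SameCycle.rfl
  | succ i ih =>
    rw [pow_succ', Equiv.Perm.mul_apply]
    exact ih.trans (sameCycle_mul_swap_apply σ hxy hn _)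

/-- K4: full description of the cycles of `σ * swap x y` in the merge case. -/
lemma sameCycle_mul_swap_iff (σ : Perm α) {x y : α} (hxy : x ≠ y)
    (hn : ¬ σ.SameCycle x y) (u v : α) :
    (σ * Equiv.swap x y).SameCycle u v ↔
      σ.SameCycle u v ∨
        ((σ.SameCycle u x ∨ σ.SameCycle u y) ∧ (σ.SameCycle v x ∨ σ.SameCycle v y)) := by
  set τ := σ * Equiv.swap x y with hτ
  have hxyτ : τ.SameCycle x y := sameCycle_mul_swap_of_not σ hxy hn
  have hstep : ∀ w : α, σ.SameCycle w (τ w) ∨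
      ((σ.SameCycle w x ∨ σ.SameCycle w y) ∧
        (σ.SameCycle (τ w) x ∨ σ.SameCycle (τ w) y)) := by
    intro w
    by_cases hwx : w = x
    · subst hwx
      refine Or.inr ⟨Or.inl SameCycle.rfl, Or.inr ?_⟩
      rw [hτ, mul_swap_apply_left]
      exact (sameCycle_apply_left).mpr SameCycle.rfl
    · by_cases hwy : w = y
      · subst hwy
        refine Or.inr ⟨Or.inr SameCycle.rfl, Or.inl ?_⟩
        rw [hτ, mul_swap_apply_right]
        exact (sameCycle_apply_left).mpr SameCycle.rfl
      · exact Or.inl ⟨1, by simp [hτ, mul_swap_apply_of_ne σ hwx hwy]⟩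
  constructor
  · intro h
    obtain ⟨i, hi, rfl⟩ := h.exists_pow_eq'
    clear hi h
    induction i with
    | zero => exact Or.inl SameCycle.rfl
    | succ i ih =>
      rw [pow_succ', Equiv.Perm.mul_apply]
      -- transitivity of R
      rcases ih with h1 | ⟨h1, h2⟩
      · rcases hstep ((τ ^ i) u) with h2 | ⟨h2, h3⟩
        · exact Or.inl (h1.trans h2)
        · refine Or.inr ⟨?_, h3⟩
          rcases h2 with h2 | h2
          · exact Or.inl (h1.trans h2)
          · exact Or.inr (h1.trans h2)
      · rcases hstep ((τ ^ i) u) with h3 | ⟨h3, h4⟩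
        · refine Or.inr ⟨h1, ?_⟩
          rcases h2 with h2 | h2
          · exact Or.inl (h3.symm.trans h2)
          · exact Or.inr (h3.symm.trans h2)
        · exact Or.inr ⟨h1, h4⟩
  · rintro (h | ⟨h1 | h1, h2 | h2⟩)
    · exact sameCycle_mul_swap_mono σ hxy hn h
    · exact (sameCycle_mul_swap_mono σ hxy hn h1).trans
        (sameCycle_mul_swap_mono σ hxy hn h2).symm
    · exact ((sameCycle_mul_swap_mono σ hxy hn h1).trans hxyτ).trans
        (sameCycle_mul_swap_mono σ hxy hn h2).symm
    · exact ((sameCycle_mul_swap_mono σ hxy hn h1).trans hxyτ.symm).trans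
        (sameCycle_mul_swap_mono σ hxy hn h2).symm
    · exact (sameCycle_mul_swap_mono σ hxy hn h1).trans
        (sameCycle_mul_swap_mono σ hxy hn h2).symm


/-- The setoid of the same-cycle relation. -/
def orbSetoid (σ : Perm α) : Setoid α := ⟨σ.SameCycle, SameCycle.equivalence σ⟩

instance orbDec (σ : Perm α) : DecidableRel (orbSetoid σ).r :=
  fun a b => inferInstanceAs (Decidable (σ.SameCycle a b))

instance orbQuotFintype (σ : Perm α) : Fintype (Quotient (orbSetoid σ)) :=
  @Quotient.fintype α _ (orbSetoid σ) (orbDec σ)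

instance orbQuotDecEq (σ : Perm α) : DecidableEq (Quotient (orbSetoid σ)) :=
  @Quotient.decidableEq α (orbSetoid σ) (orbDec σ)

/-- The number of cycles (orbits, including fixed points) of a permutation. -/
def orbCount (σ : Perm α) : ℕ := Fintype.card (Quotient (orbSetoid σ))

lemma orbMk_surjective (σ : Perm α) :
    Function.Surjective (Quotient.mk (orbSetoid σ)) :=
  fun q => Quotient.inductionOn q fun a => ⟨a, rfl⟩

lemma orbCount_le (σ : Perm α) : orbCount σ ≤ Fintype.card α :=
  Fintype.card_le_of_surjective _ (orbMk_surjective σ)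

lemma orbCount_one : orbCount (1 : Perm α) = Fintype.card α := by
  refine Fintype.card_congr ⟨Quotient.lift id ?_, Quotient.mk (orbSetoid (1 : Perm α)), ?_, fun a => rfl⟩
  · intro a b h
    exact Equiv.Perm.sameCycle_one.mp h
  · rintro ⟨a⟩
    rfl

lemma orbCount_lt (σ : Perm α) {z : α} (hz : σ z ≠ z) :
    orbCount σ < Fintype.card α :=
  Fintype.card_lt_of_surjective_not_injective _ (orbMk_surjective σ) fun w =>
    hz.symm (w (Quotient.sound' (⟨1, by simp⟩ : σ.SameCycle z (σ z))))

lemma orbCount_merge (σ : Perm α) {x y : α} (hxy : x ≠ y)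
    (hn : ¬ σ.SameCycle x y) :
    orbCount σ = orbCount (σ * Equiv.swap x y) + 1 := by
  set τ := σ * Equiv.swap x y with hτ
  set s := orbSetoid σ with hs
  set t := orbSetoid τ with ht
  have hmono : ∀ a b : α, s.r a b → t.r a b := fun a b h =>
    sameCycle_mul_swap_mono σ hxy hn h
  set φ : Quotient s → Quotient t := Quotient.map' id (fun a b h => hmono a b h) with hφ
  have hφmk : ∀ a : α, φ (Quotient.mk s a) = Quotient.mk t a := fun a => rfl
  have hcard : Fintype.card (Quotient s) =
      ∑ q ∈ (Finset.univ : Finset (Quotient t)),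
        ((Finset.univ : Finset (Quotient s)).filter fun p => φ p = q).card := by
    rw [← Finset.card_univ]
    exact Finset.card_eq_sum_card_fiberwise (fun p _ => Finset.mem_univ (φ p))
  have hfiber : ∀ q : Quotient t,
      ((Finset.univ : Finset (Quotient s)).filter fun p => φ p = q).card
        = if q = Quotient.mk t x then 2 else 1 := by
    intro q
    by_cases hq : q = Quotient.mk t x
    · subst hq
      rw [if_pos rfl]
      have : ((Finset.univ : Finset (Quotient s)).filter
          fun p => φ p = Quotient.mk t x)
          = {Quotient.mk s x, Quotient.mk s y} := by
        ext p
        induction p using Quotient.ind with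
        | _ a =>
        simp only [Finset.mem_filter, Finset.mem_univ, true_and, Finset.mem_insert,
          Finset.mem_singleton]
        rw [hφmk]
        constructor
        · intro h
          have h' : τ.SameCycle a x := Quotient.exact' h
          rcases (sameCycle_mul_swap_iff σ hxy hn a x).mp h' with h1 | ⟨h1 | h1, _⟩
          · exact Or.inl (Quotient.sound' h1)
          · exact Or.inl (Quotient.sound' h1)
          · exact Or.inr (Quotient.sound' h1)
        · intro h
          rcases h with h | h
          · have h' : σ.SameCycle a x := Quotient.exact' h
            exact Quotient.sound' (hmono a x h')
          · have h' : σ.SameCycle a y := Quotient.exact' h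
            exact Quotient.sound'
              ((hmono a y h').trans (sameCycle_mul_swap_of_not σ hxy hn).symm)
      rw [this]
      rw [Finset.card_insert_of_notMem, Finset.card_singleton]
      simp only [Finset.mem_singleton]
      intro h
      exact hn (Quotient.exact' h)
    · rw [if_neg hq]
      obtain ⟨a, ha⟩ := q.exists_rep
      rw [Finset.card_eq_one]
      refine ⟨Quotient.mk s a, ?_⟩
      ext p
      induction p using Quotient.ind with
      | _ b =>
      simp only [Finset.mem_filter, Finset.mem_univ, true_and, Finset.mem_singleton]
      constructor
      · intro h
        rw [hφmk] at h
        rw [← ha] at h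
        have h' : τ.SameCycle b a := Quotient.exact' h
        rcases (sameCycle_mul_swap_iff σ hxy hn b a).mp h' with h1 | ⟨_, h2 | h2⟩
        · exact Quotient.sound' h1
        · exfalso
          apply hq
          rw [← ha]
          exact Quotient.sound' (hmono a x h2)
        · exfalso
          apply hq
          rw [← ha]
          exact Quotient.sound'
            ((hmono a y h2).trans (sameCycle_mul_swap_of_not σ hxy hn).symm)
      · intro h
        have h' : σ.SameCycle b a := Quotient.exact' h
        rw [hφmk, ← ha]
        exact Quotient.sound' (hmono b a h')
  have : orbCount σ = ∑ q ∈ (Finset.univ : Finset (Quotient t)),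
      (if q = Quotient.mk t x then 2 else 1) := by
    rw [orbCount, hcard]
    exact Finset.sum_congr rfl fun q _ => hfiber q
  rw [this]
  have h2 : ∀ q ∈ (Finset.univ : Finset (Quotient t)),
      (if q = Quotient.mk t x then 2 else 1) = 1 + (if q = Quotient.mk t x then 1 else 0) := by
    intro q _
    by_cases h : q = Quotient.mk t x <;> simp [h]
  rw [Finset.sum_congr rfl h2, Finset.sum_add_distrib, Finset.sum_ite_eq'
    (Finset.univ : Finset (Quotient t)) (Quotient.mk t x) (fun _ => 1)]
  simp [orbCount, Finset.card_univ, add_comm]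
  rfl

lemma orbCount_split (σ : Perm α) {x y : α} (hxy : x ≠ y)
    (hs : σ.SameCycle x y) :
    orbCount (σ * Equiv.swap x y) = orbCount σ + 1 := by
  set τ := σ * Equiv.swap x y with hτ
  have hn : ¬ τ.SameCycle x y := not_sameCycle_mul_swap_of σ hxy hs
  have h := orbCount_merge τ hxy hn
  rwa [hτ, mul_assoc, Equiv.swap_mul_self, mul_one] at h


/-- `n - c`:  the candidate value of the norm. -/
def Nrm (σ : Perm α) : ℕ := Fintype.card α - orbCount σ

lemma Nrm_one : Nrm (1 : Perm α) = 0 := by simp [Nrm, orbCount_one]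

lemma Nrm_mul_swap_le (σ : Perm α) {t : Perm α} (ht : t.IsSwap) :
    Nrm (σ * t) ≤ Nrm σ + 1 := by
  obtain ⟨x, y, hxy, rfl⟩ := ht
  have h1 := orbCount_le σ
  have h2 := orbCount_le (σ * Equiv.swap x y)
  by_cases h : σ.SameCycle x y
  · have := orbCount_split σ hxy h
    unfold Nrm
    omega
  · have := orbCount_merge σ hxy h
    unfold Nrm
    omega

lemma Nrm_mul_list_le : ∀ (L : List (Perm α)) (σ : Perm α), (∀ t ∈ L, t.IsSwap) →
    Nrm (σ * L.prod) ≤ Nrm σ + L.length := by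
  intro L
  induction L with
  | nil => intro σ _; simp
  | cons t L ih =>
    intro σ h
    rw [List.prod_cons, ← mul_assoc]
    calc Nrm (σ * t * L.prod) ≤ Nrm (σ * t) + L.length :=
          ih (σ * t) fun u hu => h u (List.mem_cons_of_mem t hu)
      _ ≤ Nrm σ + 1 + L.length := by
          have := Nrm_mul_swap_le σ (h t List.mem_cons_self)
          omega
      _ = Nrm σ + (t :: L).length := by simp [List.length_cons]; ring

lemma Nrm_list_le (L : List (Perm α)) (h : ∀ t ∈ L, t.IsSwap) :
    Nrm L.prod ≤ L.length := by
  have := Nrm_mul_list_le L 1 h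
  simpa [Nrm_one] using this

lemma exists_minimal_list (σ : Perm α) :
    ∃ L : List (Perm α), (∀ t ∈ L, t.IsSwap) ∧ L.prod = σ ∧ L.length = Nrm σ := by
  suffices H : ∀ (n : ℕ) (σ : Perm α), Nrm σ = n →
      ∃ L : List (Perm α), (∀ t ∈ L, t.IsSwap) ∧ L.prod = σ ∧ L.length = Nrm σ from
    H (Nrm σ) σ rfl
  intro n
  induction n using Nat.strong_induction_on with
  | _ n ih =>
    intro σ hn
    by_cases h1 : σ = 1
    · subst h1
      exact ⟨[], by simp, by simp, by simp [Nrm_one]⟩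
    · have hz : ∃ z, σ z ≠ z := by
        by_contra h
        push_neg at h
        exact h1 (Equiv.ext h)
      obtain ⟨z, hz⟩ := hz
      have hzz : z ≠ σ z := fun h => hz h.symm
      have hsplit : orbCount (σ * Equiv.swap z (σ z)) = orbCount σ + 1 :=
        orbCount_split σ hzz ⟨1, rfl⟩
      have hlt := orbCount_lt σ hz
      have hle := orbCount_le (σ * Equiv.swap z (σ z))
      have hN : Nrm (σ * Equiv.swap z (σ z)) = Nrm σ - 1 ∧ 1 ≤ Nrm σ := by
        unfold Nrm; omega
      obtain ⟨L', hL1, hL2, hL3⟩ := ih (Nrm σ - 1) (by omega)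
        (σ * Equiv.swap z (σ z)) (by omega)
      refine ⟨L' ++ [Equiv.swap z (σ z)], ?_, ?_, ?_⟩
      · intro t ht
        rcases List.mem_append.mp ht with h | h
        · exact hL1 t h
        · rw [List.mem_singleton.mp h]
          exact ⟨z, σ z, hzz, rfl⟩
      · rw [List.prod_append, List.prod_singleton, hL2, mul_assoc,
          Equiv.swap_mul_self, mul_one]
      · rw [List.length_append, List.length_singleton, hL3]
        omega

lemma permNorm_eq (σ : Perm α) : permNorm σ = Nrm σ := by
  obtain ⟨L, h1, h2, h3⟩ := exists_minimal_list σ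
  apply le_antisymm
  · exact Nat.sInf_le ⟨L, h3, h1, h2⟩
  · refine le_csInf ⟨Nrm σ, L, h3, h1, h2⟩ ?_
    rintro k ⟨L', hl, hsw, hp⟩
    have := Nrm_list_le L' hsw
    rw [hp] at this
    omega

end SwapFactors

open SwapFactors in
/-- Let `π ∈ S_L` with `‖π‖ = k` and let `t₁t₂⋯t_k` be a product of transpositions
equal to `π`. Then for every `j`, the two elements swapped by `t_j` lie in two
different cycles of the partial product `t₁⋯t_{j−1}`, and lie in the same cycle
of `π`. -/
theorem swap_factors_mix_cycles {α : Type*} [Fintype α] [DecidableEq α]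
    (π : Equiv.Perm α) (l : List (Equiv.Perm α))
    (hswap : ∀ t ∈ l, t.IsSwap) (hprod : l.prod = π) (hlen : l.length = permNorm π)
    (j : ℕ) (hj : j < l.length) (x y : α) (hxy : x ≠ y)
    (hget : l.get ⟨j, hj⟩ = Equiv.swap x y) :
    ¬ ((l.take j).prod).SameCycle x y ∧ π.SameCycle x y := by
  have hNπ : Nrm π = l.length := by rw [hlen, permNorm_eq]
  have htake : ∀ i : ℕ, ∀ t ∈ l.take i, Equiv.Perm.IsSwap t :=
    fun i t ht => hswap t (List.take_subset i l ht)
  have hdropS : ∀ i : ℕ, ∀ t ∈ l.drop i, Equiv.Perm.IsSwap t :=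
    fun i t ht => hswap t (List.drop_subset i l ht)
  have hle : ∀ i : ℕ, Nrm (l.take i).prod ≤ i := by
    intro i
    have := Nrm_list_le (l.take i) (htake i)
    have hlt : (l.take i).length ≤ i := by
      rw [List.length_take]; omega
    omega
  have hNrm : ∀ i ≤ l.length, Nrm (l.take i).prod = i := by
    intro i hi
    have h1 := hle i
    have h2 : Nrm π ≤ Nrm (l.take i).prod + (l.drop i).length := by
      have := Nrm_mul_list_le (l.drop i) (l.take i).prod (hdropS i)
      rw [List.prod_take_mul_prod_drop, hprod] at this
      exact this
    rw [List.length_drop] at h2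
    omega
  have hstep : ∀ (i : ℕ) (hik : i < l.length) (a b : α), a ≠ b →
      l.get ⟨i, hik⟩ = Equiv.swap a b → ¬ ((l.take i).prod).SameCycle a b := by
    intro i hik a b hab hgeti hsc
    have hPsucc : (l.take (i + 1)).prod = (l.take i).prod * Equiv.swap a b := by
      rw [List.prod_take_succ l i hik, ← hgeti, List.get_eq_getElem]
    have hsplit := orbCount_split ((l.take i).prod) hab hsc
    rw [← hPsucc] at hsplit
    have h1 : Nrm (l.take i).prod = i := hNrm i (le_of_lt hik)
    have h2 : Nrm (l.take (i + 1)).prod = i + 1 := hNrm (i + 1) hik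
    have h3 := orbCount_le ((l.take i).prod)
    unfold Nrm at h1 h2
    omega
  have part1 : ¬ ((l.take j).prod).SameCycle x y := hstep j hj x y hxy hget
  refine ⟨part1, ?_⟩
  have hbase : ((l.take (j + 1)).prod).SameCycle x y := by
    have hPsucc : (l.take (j + 1)).prod = (l.take j).prod * Equiv.swap x y := by
      rw [List.prod_take_succ l j hj, ← hget, List.get_eq_getElem]
    rw [hPsucc]
    exact sameCycle_mul_swap_of_not _ hxy part1
  have hprop : ∀ m, j + 1 ≤ m → m ≤ l.length → ((l.take m).prod).SameCycle x y := by
    intro m hm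
    induction m, hm using Nat.le_induction with
    | base => intro _; exact hbase
    | succ m hm ih =>
      intro hm1
      have hmlt : m < l.length := hm1
      have hPm := ih (le_of_lt hmlt)
      obtain ⟨a, b, hab, hgetm⟩ := hswap (l.get ⟨m, hmlt⟩) (l.get_mem _)
      have hnot := hstep m hmlt a b hab hgetm
      have hPsucc : (l.take (m + 1)).prod = (l.take m).prod * Equiv.swap a b := by
        rw [List.prod_take_succ l m hmlt, ← hgetm, List.get_eq_getElem]
      rw [hPsucc]
      exact sameCycle_mul_swap_mono _ hab hnot hPm
  have := hprop l.length (by omega) le_rfl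
  rwa [List.take_length, hprod] at this
end

section
/- Let F₄ be free on a₁, b₁, a₂, b₂ and δ₂ = [a₁,b₁][a₂,b₂]. The endomorphism of F₄ given by a₁ ↦ a₁a₂a₁a₂⁻¹a₁⁻¹, b₁ ↦ a₁a₂a₁⁻¹a₂⁻¹b₁a₁²a₂⁻¹a₁⁻¹, a₂ ↦ a₁a₂a₁⁻¹, b₂ ↦ b₂a₂a₁⁻¹ is an automorphism fixing δ₂. -/
open scoped commutatorElement

/-- Let `F₄` be free on `a₁, b₁, a₂, b₂` (generators `0, 1, 2, 3`) and
`δ₂ = [a₁,b₁][a₂,b₂]`. The endomorphism of `F₄` given by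
`a₁ ↦ a₁a₂a₁a₂⁻¹a₁⁻¹`, `b₁ ↦ a₁a₂a₁⁻¹a₂⁻¹b₁a₁²a₂⁻¹a₁⁻¹`, `a₂ ↦ a₁a₂a₁⁻¹`,
`b₂ ↦ b₂a₂a₁⁻¹` is an automorphism fixing `δ₂`. -/
theorem explicit_aut_F4_fixes_delta2 :
    ∀ a b c d : FreeGroup (Fin 4),
      a = FreeGroup.of 0 → b = FreeGroup.of 1 → c = FreeGroup.of 2 → d = FreeGroup.of 3 →
      Function.Bijective
          (FreeGroup.lift ![a * c * a * c⁻¹ * a⁻¹,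
            a * c * a⁻¹ * c⁻¹ * b * a * a * c⁻¹ * a⁻¹, a * c * a⁻¹, d * c * a⁻¹] :
            FreeGroup (Fin 4) → FreeGroup (Fin 4)) ∧
        FreeGroup.lift ![a * c * a * c⁻¹ * a⁻¹,
            a * c * a⁻¹ * c⁻¹ * b * a * a * c⁻¹ * a⁻¹, a * c * a⁻¹, d * c * a⁻¹]
          (⁅a, b⁆ * ⁅c, d⁆) = ⁅a, b⁆ * ⁅c, d⁆ := by
  intro a b c d ha hb hc hd
  subst ha hb hc hd
  set a := (FreeGroup.of 0 : FreeGroup (Fin 4))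
  set b := (FreeGroup.of 1 : FreeGroup (Fin 4))
  set c := (FreeGroup.of 2 : FreeGroup (Fin 4))
  set d := (FreeGroup.of 3 : FreeGroup (Fin 4))
  set f := (FreeGroup.lift ![a * c * a * c⁻¹ * a⁻¹,
      a * c * a⁻¹ * c⁻¹ * b * a * a * c⁻¹ * a⁻¹, a * c * a⁻¹, d * c * a⁻¹] :
      FreeGroup (Fin 4) →* FreeGroup (Fin 4)) with hf
  set g := (FreeGroup.lift ![c⁻¹ * a * c,
      c⁻¹ * a⁻¹ * c * a * b * a⁻¹ * c, c⁻¹ * a⁻¹ * c * a * c, d * c⁻¹ * c⁻¹ * a * c] :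
      FreeGroup (Fin 4) →* FreeGroup (Fin 4)) with hg
  have hgf : g.comp f = MonoidHom.id _ := by
    apply FreeGroup.ext_hom
    intro i
    fin_cases i <;>
      simp [hf, hg, a, b, c, d, Fin.isValue, Matrix.cons_val_zero, Matrix.cons_val_one] <;>
      group
  have hfg : f.comp g = MonoidHom.id _ := by
    apply FreeGroup.ext_hom
    intro i
    fin_cases i <;>
      simp [hf, hg, a, b, c, d, Fin.isValue, Matrix.cons_val_zero, Matrix.cons_val_one] <;>
      group
  constructor
  · constructor
    · intro x y hxy
      have := congrArg g hxy
      calc x = (g.comp f) x := by rw [hgf]; rfl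
        _ = (g.comp f) y := this
        _ = y := by rw [hgf]; rfl
    · intro y
      exact ⟨g y, by have := DFunLike.congr_fun hfg y; simpa using this⟩
  · simp only [commutatorElement_def, map_mul, map_inv, hf, FreeGroup.lift_apply_of, a, b, c, d,
      Matrix.cons_val_zero, Matrix.cons_val_one, Matrix.head_cons, Matrix.cons_val_two,
      Matrix.cons_val_three, Matrix.tail_cons]
    group
end

section
/- Let a group G act on a locally finite graded poset P by order-preserving, rank-preserving bijections, and suppose that whenever x₀ < x₁ < ⋯ < x_k in P and g₀.x₀ < g₁.x₁ < ⋯ < g_k.x_k for some g₀,...,g_k ∈ G, there exists g ∈ G with g.x_i = g_i.x_i for all i. Then the geometric realization of the order complex of the quotient poset P/G is homeomorphic to the topological quotient of the geometric realization |P| by the G-action. -/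
open CategoryTheory

lemma preorder_functor_ext {X Y : Type} [Preorder X] [Preorder Y]
    {F G' : X ⥤ Y} (h : ∀ x, F.obj x = G'.obj x) : F = G' :=
  CategoryTheory.Functor.ext h (fun _ _ _ => Subsingleton.elim _ _)

lemma ca_ext {X : Type} [Preorder X] {m : ℕ} {c c' : ComposableArrows X m}
    (h : ∀ i, c.obj i = c'.obj i) : c = c' :=
  CategoryTheory.Functor.ext h (fun _ _ _ => Subsingleton.elim _ _)

lemma ca_monotone {X : Type} [Preorder X] {m : ℕ} (c : ComposableArrows X m) :
    Monotone c.obj := fun _ _ h => leOfHom (c.map (homOfLE h))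

lemma collapse_chain {P : Type} [PartialOrder P] :
    ∀ (m : ℕ) (d : Fin (m + 1) → P), Monotone d →
      ∃ (k : ℕ) (ρ : Fin (m + 1) → Fin (k + 1)), Monotone ρ ∧ Function.Surjective ρ ∧
        ∀ i i', (ρ i = ρ i' ↔ d i = d i') := by
  intro m
  induction m with
  | zero =>
    intro d _
    refine ⟨0, fun _ => 0, monotone_const, fun j => ⟨0, (Fin.eq_zero j).symm⟩, ?_⟩
    intro i i'
    rw [Fin.eq_zero i, Fin.eq_zero i']
    simp
  | succ n ih =>
    intro d hd
    obtain ⟨k, ρ, hρm, hρs, hρiff⟩ := ih (fun i => d i.castSucc)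
      (fun i j hij => hd (by exact_mod_cast hij))
    have hmono_last : d (Fin.castSucc (Fin.last n)) ≤ d (Fin.last (n + 1)) :=
      hd (by simp [Fin.le_def])
    rcases eq_or_lt_of_le hmono_last with hEq | hLt
    · refine ⟨k, Fin.lastCases (ρ (Fin.last n)) ρ, ?_, ?_, ?_⟩
      · intro i j hij
        induction j using Fin.lastCases with
        | last =>
          induction i using Fin.lastCases with
          | last => simp
          | cast i => simpa using hρm (Fin.le_last i)
        | cast j =>
          induction i using Fin.lastCases with
          | last => exact absurd hij (Fin.castSucc_lt_last j).not_ge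
          | cast i => simpa using hρm (by exact_mod_cast hij)
      · intro j
        obtain ⟨i, hi⟩ := hρs j
        exact ⟨i.castSucc, by simpa using hi⟩
      · intro i i'
        induction i using Fin.lastCases with
        | last =>
          induction i' using Fin.lastCases with
          | last => simp
          | cast i' =>
            simp only [Fin.lastCases_last, Fin.lastCases_castSucc]
            rw [← hEq]
            exact (hρiff (Fin.last n) i').trans (by tauto)
        | cast i =>
          induction i' using Fin.lastCases with
          | last =>
            simp only [Fin.lastCases_last, Fin.lastCases_castSucc]
            rw [← hEq]
            exact hρiff i (Fin.last n)
          | cast i' => simpa using hρiff i i'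
    · refine ⟨k + 1, Fin.lastCases (Fin.last (k + 1)) (fun i => (ρ i).castSucc), ?_, ?_, ?_⟩
      · intro i j hij
        induction j using Fin.lastCases with
        | last => simp [Fin.le_last]
        | cast j =>
          induction i using Fin.lastCases with
          | last => exact absurd hij (Fin.castSucc_lt_last j).not_ge
          | cast i => simpa using hρm (by exact_mod_cast hij)
      · intro j
        induction j using Fin.lastCases with
        | last => exact ⟨Fin.last (n + 1), by simp⟩
        | cast j =>
          obtain ⟨i, hi⟩ := hρs j
          exact ⟨i.castSucc, by simpa using congrArg Fin.castSucc hi⟩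
      · have hne : ∀ i : Fin (n + 1), d i.castSucc ≠ d (Fin.last (n + 1)) := by
          intro i hcon
          have h1 : d i.castSucc < d (Fin.last (n + 1)) :=
            lt_of_le_of_lt (hd (show (i.castSucc : Fin (n + 2)) ≤ (Fin.last n).castSucc by
              exact_mod_cast Fin.le_last i)) hLt
          exact h1.ne hcon
        intro i i'
        induction i using Fin.lastCases with
        | last =>
          induction i' using Fin.lastCases with
          | last => simp
          | cast i' =>
            simp only [Fin.lastCases_last, Fin.lastCases_castSucc]
            exact iff_of_false (Fin.castSucc_lt_last (ρ i')).ne' (fun hcon => hne i' hcon.symm)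
        | cast i =>
          induction i' using Fin.lastCases with
          | last =>
            simp only [Fin.lastCases_last, Fin.lastCases_castSucc]
            exact iff_of_false (Fin.castSucc_lt_last (ρ i)).ne (hne i)
          | cast i' => simpa [Fin.castSucc_inj] using hρiff i i'

lemma lift_chain {P Q : Type} [PartialOrder P] [PartialOrder Q]
    {G : Type} [Group G] [MulAction G P]
    (π : P → Q) (hπ_surj : Function.Surjective π)
    (hG_mono : ∀ g : G, Monotone (fun x : P => g • x))
    (hπ_fib : ∀ x y : P, π x = π y ↔ ∃ g : G, g • x = y)
    (hπ_le : ∀ a b : Q, a ≤ b ↔ ∃ x y : P, π x = a ∧ π y = b ∧ x ≤ y) :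
    ∀ (m : ℕ) (c : Fin (m + 1) → Q), Monotone c →
      ∃ d : Fin (m + 1) → P, Monotone d ∧ ∀ i, π (d i) = c i := by
  intro m
  induction m with
  | zero =>
    intro c _
    obtain ⟨x, hx⟩ := hπ_surj (c 0)
    exact ⟨fun _ => x, monotone_const, fun i => by rw [Fin.eq_zero i]; exact hx⟩
  | succ n ih =>
    intro c hc
    obtain ⟨d, hd, hdc⟩ := ih (fun i => c i.castSucc)
      (fun i j h => hc (by exact_mod_cast h))
    have hle : c (Fin.castSucc (Fin.last n)) ≤ c (Fin.last (n + 1)) :=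
      hc (by simp [Fin.le_def])
    obtain ⟨y, z, hy, hz, hyz⟩ := (hπ_le _ _).mp hle
    have hpy : π y = π (d (Fin.last n)) := by rw [hy, hdc]
    obtain ⟨g, hg⟩ := (hπ_fib _ _).mp hpy
    refine ⟨Fin.lastCases (g • z) d, ?_, ?_⟩
    · intro i j hij
      induction j using Fin.lastCases with
      | last =>
        induction i using Fin.lastCases with
        | last => simp
        | cast i =>
          simp only [Fin.lastCases_castSucc, Fin.lastCases_last]
          calc d i ≤ d (Fin.last n) := hd (Fin.le_last i)
            _ = g • y := hg.symm
            _ ≤ g • z := hG_mono g hyz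
      | cast j =>
        induction i using Fin.lastCases with
        | last => exact absurd hij (Fin.castSucc_lt_last j).not_ge
        | cast i =>
          simp only [Fin.lastCases_castSucc]
          exact hd (by exact_mod_cast hij)
    · intro i
      induction i using Fin.lastCases with
      | last =>
        simp only [Fin.lastCases_last]
        have : π (g • z) = π z := (hπ_fib _ _).mpr ⟨g⁻¹, inv_smul_smul g z⟩
        rw [this, hz]
      | cast i => simpa using hdc i

lemma orbit_chain {P Q : Type} [PartialOrder P] [PartialOrder Q]
    {G : Type} [Group G] [MulAction G P] (rk : P → ℕ)
    (hrk_lt : ∀ x y : P, x < y → rk x < rk y)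
    (hG_rk : ∀ (g : G) (x : P), rk (g • x) = rk x)
    (hreg : ∀ (k : ℕ) (x : Fin (k + 1) → P) (g : Fin (k + 1) → G), StrictMono x →
      StrictMono (fun i => g i • x i) → ∃ g₀ : G, ∀ i, g₀ • x i = g i • x i)
    (π : P → Q) (hπ_fib : ∀ x y : P, π x = π y ↔ ∃ g : G, g • x = y)
    (m : ℕ) (d d' : Fin (m + 1) → P) (hd : Monotone d) (hd' : Monotone d')
    (h : ∀ i, π (d i) = π (d' i)) : ∃ g : G, ∀ i, g • d i = d' i := by
  classical
  have heq : ∀ {x y : P}, x ≤ y → π x = π y → x = y := fun {x y} hxy hπ => by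
    rcases eq_or_lt_of_le hxy with h' | h'
    · exact h'
    · exfalso
      obtain ⟨g, hg⟩ := (hπ_fib x y).mp hπ
      have := hrk_lt x y h'
      rw [← hg, hG_rk] at this
      exact lt_irrefl _ this
  obtain ⟨k, ρ, hρm, hρs, hρiff⟩ := collapse_chain m d hd
  let σ : Fin (k + 1) → Fin (m + 1) := fun j => (hρs j).choose
  have hσ : ∀ j, ρ (σ j) = j := fun j => (hρs j).choose_spec
  have hdσρ : ∀ i, d (σ (ρ i)) = d i := fun i => (hρiff _ _).mp (hσ (ρ i))
  have hσ_strict : StrictMono σ := by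
    intro j j' hjj'
    by_contra hle
    exact absurd (hρm (not_lt.mp hle)) (by simpa [hσ] using hjj'.not_ge)
  have hdσ_strict : StrictMono (fun j => d (σ j)) := by
    intro j j' hjj'
    rcases eq_or_lt_of_le (hd (hσ_strict hjj').le) with h2 | h2
    · exact absurd ((hρiff _ _).mpr h2) (by simpa [hσ] using hjj'.ne)
    · exact h2
  have hgi : ∀ i, ∃ g : G, g • d i = d' i := fun i => (hπ_fib _ _).mp (h i)
  let gg : Fin (m + 1) → G := fun i => (hgi i).choose
  have hgg : ∀ i, gg i • d i = d' i := fun i => (hgi i).choose_spec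
  have hd'σ_strict : StrictMono (fun j => d' (σ j)) := by
    intro j j' hjj'
    rcases eq_or_lt_of_le (hd' (hσ_strict hjj').le) with h2 | h2
    · exfalso
      have hππ : π (d (σ j)) = π (d (σ j')) := by rw [h (σ j), h (σ j'), h2]
      exact absurd (heq (hdσ_strict hjj').le hππ) (hdσ_strict hjj').ne
    · exact h2
  obtain ⟨g₀, hg₀⟩ := hreg k (fun j => d (σ j)) (fun j => gg (σ j)) hdσ_strict
    (by simpa only [hgg] using hd'σ_strict)
  refine ⟨g₀, fun i => ?_⟩
  have h1 : g₀ • d (σ (ρ i)) = gg (σ (ρ i)) • d (σ (ρ i)) := hg₀ (ρ i)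
  rw [hgg, hdσρ] at h1
  rw [h1]
  have hπeq : π (d' (σ (ρ i))) = π (d' i) := by rw [← h, ← h, hdσρ]
  rcases le_total (σ (ρ i)) i with hle | hle
  · exact heq (hd' hle) hπeq
  · exact (heq (hd' hle) hπeq.symm).symm

/-- The geometric realization of the order complex of a poset (realized as the
geometric realization of the nerve of the poset viewed as a category). -/
noncomputable def realiz (X : Type) [Preorder X] : TopCat :=
  SSet.toTop.obj (nerveFunctor.obj (Cat.of X))

/-- The continuous map on geometric realizations induced by an order-preserving map. -/
noncomputable def realizMap {X Y : Type} [Preorder X] [Preorder Y] {f : X → Y}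
    (hf : Monotone f) : realiz X ⟶ realiz Y :=
  SSet.toTop.map (nerveFunctor.map (X := Cat.of X) (Y := Cat.of Y) hf.functor.toCatHom)

/-- Let a group `G` act on a locally finite graded poset `P` (rank function `rk`) by
order-preserving, rank-preserving bijections, such that whenever `x₀ < ⋯ < x_k` and
`g₀.x₀ < ⋯ < g_k.x_k` are chains, some single `g ∈ G` satisfies `g.x_i = g_i.x_i` for
all `i`. Let `Q` be the quotient poset `P/G`, i.e., there is a surjective monotone map
`π : P → Q` whose fibers are the `G`-orbits, with `a ≤ b` in `Q` iff some representatives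
are comparable. Then the geometric realization of the order complex of `P/G` is
homeomorphic to the topological quotient of `|P|` by the induced `G`-action. -/
theorem realization_of_quotient_poset {P Q : Type} [PartialOrder P] [PartialOrder Q]
    (G : Type) [Group G] [MulAction G P] (rk : P → ℕ)
    (hlocfin : ∀ x y : P, (Set.Icc x y).Finite)
    (hrk_lt : ∀ x y : P, x < y → rk x < rk y)
    (hrk_cov : ∀ x y : P, x ⋖ y → rk y = rk x + 1)
    (hG_mono : ∀ g : G, Monotone (fun x : P => g • x))
    (hG_rk : ∀ (g : G) (x : P), rk (g • x) = rk x)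
    (hreg : ∀ (k : ℕ) (x : Fin (k + 1) → P) (g : Fin (k + 1) → G), StrictMono x →
      StrictMono (fun i => g i • x i) → ∃ g₀ : G, ∀ i, g₀ • x i = g i • x i)
    (π : P → Q) (hπ_mono : Monotone π) (hπ_surj : Function.Surjective π)
    (hπ_fib : ∀ x y : P, π x = π y ↔ ∃ g : G, g • x = y)
    (hπ_le : ∀ a b : Q, a ≤ b ↔ ∃ x y : P, π x = a ∧ π y = b ∧ x ≤ y) :
    Nonempty
      ((Quot fun a b : realiz P => ∃ g : G, realizMap (hG_mono g) a = b) ≃ₜ realiz Q) := by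
  classical
  haveI : Limits.PreservesColimitsOfSize.{0, 0} SSet.toTop :=
    sSetTopAdj.leftAdjoint_preservesColimits
  -- the single-object diagram of the G-action on the nerve of P
  let Fs : SingleObj G ⥤ SSet :=
    { obj := fun _ => nerveFunctor.obj (Cat.of P)
      map := fun g => nerveFunctor.map (X := Cat.of P) (Y := Cat.of P) (hG_mono g).functor.toCatHom
      map_id := fun _ => by
        show nerveFunctor.map (X := Cat.of P) (Y := Cat.of P) (hG_mono (1 : G)).functor.toCatHom = _
        rw [show (hG_mono (1 : G)).functor = 𝟭 P from
          preorder_functor_ext (X := P) (Y := P) (fun x => one_smul G x)]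
        exact nerveFunctor.map_id (Cat.of P)
      map_comp := fun {_ _ _} g h => by
        show nerveFunctor.map (X := Cat.of P) (Y := Cat.of P) (hG_mono (h * g)).functor.toCatHom = _
        rw [← nerveFunctor.map_comp]
        exact congrArg nerveFunctor.map (congrArg Functor.toCatHom (preorder_functor_ext (X := P) (Y := P) (fun x => mul_smul h g x))) }
  -- the cocone with point the nerve of Q
  let c₁ : Limits.Cocone Fs :=
    { pt := nerveFunctor.obj (Cat.of Q)
      ι := { app := fun _ => nerveFunctor.map (X := Cat.of P) (Y := Cat.of Q) hπ_mono.functor.toCatHom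
             naturality := fun _ _ g => by
               let g' : G := g
               show nerveFunctor.map _ ≫ nerveFunctor.map _ = nerveFunctor.map _ ≫ 𝟙 _
               rw [Category.comp_id, ← nerveFunctor.map_comp]
               exact congrArg nerveFunctor.map (congrArg Functor.toCatHom (preorder_functor_ext (X := P) (Y := Q)
                 (fun x => (hπ_fib (g' • x) x).mpr ⟨g'⁻¹, inv_smul_smul g' x⟩))) } }
  -- lifting of chains
  have hsur : ∀ (m : ℕ) (c : ComposableArrows Q m),
      ∃ d : ComposableArrows P m, ∀ i, π (d.obj i) = c.obj i := by
    intro m c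
    obtain ⟨dd, hdd, hddc⟩ := lift_chain π hπ_surj hG_mono hπ_fib hπ_le m c.obj (ca_monotone c)
    exact ⟨hdd.functor, hddc⟩
  -- the cocone is a pointwise colimit
  have key : ∀ Δ : SimplexCategoryᵒᵖ,
      Limits.IsColimit (((evaluation SimplexCategoryᵒᵖ (Type 0)).obj Δ).mapCocone c₁) := by
    intro Δ
    refine
      { desc := fun s => TypeCat.ofHom (fun c => s.ι.app (SingleObj.star G) (hsur Δ.unop.len c).choose)
        fac := ?_
        uniq := ?_ }
    · intro s j
      ext d
      have hspec := (hsur Δ.unop.len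
        ((nerveFunctor.map (X := Cat.of P) (Y := Cat.of Q) hπ_mono.functor.toCatHom).app Δ d)).choose_spec
      set d₀ := (hsur Δ.unop.len
        ((nerveFunctor.map (X := Cat.of P) (Y := Cat.of Q) hπ_mono.functor.toCatHom).app Δ d)).choose
        with hd₀
      obtain ⟨g, hg⟩ := orbit_chain rk hrk_lt hG_rk hreg π hπ_fib Δ.unop.len d₀.obj d.obj
        (ca_monotone (X := P) d₀) (ca_monotone (X := P) d) hspec
      have hmap : (Fs ⋙ (evaluation SimplexCategoryᵒᵖ (Type 0)).obj Δ).map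
          (X := j) (Y := j) g d₀ = d :=
        ca_ext (X := P) (fun i => hg i)
      have h2 : s.ι.app j
            ((Fs ⋙ (evaluation SimplexCategoryᵒᵖ (Type 0)).obj Δ).map (X := j) (Y := j) g d₀)
          = s.ι.app j d₀ := ConcreteCategory.congr_hom (s.w (j := j) (j' := j) g) d₀
      rw [hmap] at h2
      exact h2.symm
    · intro s f w
      ext c
      have hc : (nerveFunctor.map (X := Cat.of P) (Y := Cat.of Q) hπ_mono.functor.toCatHom).app Δ
          ((hsur Δ.unop.len c).choose) = c :=
        ca_ext (X := Q) (fun i => (hsur Δ.unop.len c).choose_spec i)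
      calc f c = f ((nerveFunctor.map (X := Cat.of P) (Y := Cat.of Q) hπ_mono.functor.toCatHom).app Δ
              ((hsur Δ.unop.len c).choose)) := by rw [hc]
        _ = s.ι.app (SingleObj.star G) ((hsur Δ.unop.len c).choose) :=
              ConcreteCategory.congr_hom (w (SingleObj.star G)) ((hsur Δ.unop.len c).choose)
  have hcolim₁ : Limits.IsColimit c₁ := Limits.evaluationJointlyReflectsColimits _ key
  have hc₂ : Limits.IsColimit (SSet.toTop.mapCocone c₁) :=
    Limits.isColimitOfPreserves SSet.toTop hcolim₁
  let r : realiz P → realiz P → Prop := fun a b => ∃ g : G, realizMap (hG_mono g) a = b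
  let c₃ : Limits.Cocone (Fs ⋙ SSet.toTop) :=
    { pt := TopCat.of (Quot r)
      ι := { app := fun _ => TopCat.ofHom ⟨Quot.mk r, continuous_quot_mk⟩
             naturality := fun _ _ g => by
               ext a
               show Quot.mk r ((Fs ⋙ SSet.toTop).map g a) = Quot.mk r a
               exact (Quot.sound ⟨g, rfl⟩).symm } }
  have hc₃ : Limits.IsColimit c₃ := by
    refine
      { desc := fun s => TopCat.ofHom ⟨Quot.lift (s.ι.app (SingleObj.star G)) ?_, ?_⟩
        fac := ?_
        uniq := ?_ }
    · rintro a b ⟨g, hg⟩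
      rw [← hg]
      exact (ConcreteCategory.congr_hom (s.w g) a).symm
    · exact continuous_quot_lift _ (s.ι.app (SingleObj.star G)).hom.continuous
    · intro s j
      ext a
      rfl
    · intro s f w
      ext x
      induction x using Quot.ind with
      | _ a => exact ConcreteCategory.congr_hom (w (SingleObj.star G)) a
  exact ⟨TopCat.homeoOfIso (hc₂.coconePointUniqueUpToIso hc₃).symm⟩
end
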